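/- arXiv:1406.2145 — 3 statements merged into one kernel-verified Lean document; each statement's English description precedes it below -/
import Mathlib

section
/- For a prime ideal q of B not containing J, the localization of A ⋈^f J at the prime q̄^f := {(a, f(a)+j) | a ∈ A, j ∈ J, f(a)+j ∈ q} is isomorphic as a ring to the localization B_q. -/
set_option synthInstance.maxHeartbeats 1000000
set_option maxHeartbeats 1000000
/-- The amalgamation `A ⋈^f J` of `A` with `B` along `J` with respect to `f`,
as a subring of `A × B`. -/
def Amalg {A B : Type*} [CommRing A] [CommRing B] (f : A →+* B) (J : Ideal B) :
    Subring (A × B) where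
  carrier := {p | ∃ a : A, ∃ j ∈ J, p = (a, f a + j)}
  zero_mem' := ⟨0, 0, J.zero_mem, by simp [Prod.ext_iff]⟩
  one_mem' := ⟨1, 0, J.zero_mem, by simp [Prod.ext_iff]⟩
  add_mem' := by
    rintro _ _ ⟨a, j, hj, rfl⟩ ⟨a', j', hj', rfl⟩
    exact ⟨a + a', j + j', J.add_mem hj hj', by simp [Prod.ext_iff]; ring⟩
  neg_mem' := by
    rintro _ ⟨a, j, hj, rfl⟩
    exact ⟨-a, -j, J.neg_mem hj, by simp [Prod.ext_iff]; ring⟩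
  mul_mem' := by
    rintro _ _ ⟨a, j, hj, rfl⟩ ⟨a', j', hj', rfl⟩
    refine ⟨a * a', f a * j' + f a' * j + j * j',
      J.add_mem (J.add_mem (J.mul_mem_left _ hj') (J.mul_mem_left _ hj))
        (J.mul_mem_left _ hj'), by simp [Prod.ext_iff]; ring⟩

/-- For a prime `q` of `B` not containing `J`, the localization of `A ⋈^f J` at
`q̄^f = {(a, f(a)+j) | f(a)+j ∈ q}` is isomorphic to `B_q`. -/
theorem amalgamation_localization_at_qbar {A B : Type*} [CommRing A] [CommRing B]
    (f : A →+* B) (J : Ideal B) (q : Ideal B) [hq : q.IsPrime] (hJq : ¬ J ≤ q)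
    (Q : Ideal (Amalg f J)) [hQ : Q.IsPrime]
    (hQ2 : (Q : Set (Amalg f J)) = {x : Amalg f J | (x : A × B).2 ∈ q}) :
    Nonempty (Localization.AtPrime Q ≃+* Localization.AtPrime q) := by

  classical
  -- pick j0 ∈ J \ q
  obtain ⟨j0, hj0J, hj0q⟩ := SetLike.not_le_iff_exists.mp hJq
  -- the projection to the second coordinate
  set π : Amalg f J →+* B := (RingHom.snd A B).comp (Amalg f J).subtype with hπ
  set φ : Amalg f J →+* Localization.AtPrime q :=
    (algebraMap B (Localization.AtPrime q)).comp π with hφ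
  letI : Algebra (Amalg f J) (Localization.AtPrime q) := φ.toAlgebra
  have halg : ∀ x : Amalg f J,
      algebraMap (Amalg f J) (Localization.AtPrime q) x
        = algebraMap B (Localization.AtPrime q) (x : A × B).2 := fun x => rfl
  have hmem : ∀ x : Amalg f J, x ∈ Q.primeCompl ↔ (x : A × B).2 ∉ q := by
    intro x
    have := Set.ext_iff.mp hQ2 x
    simp only [SetLike.mem_coe, Set.mem_setOf_eq] at this
    exact not_congr this
  -- auxiliary element builder: (0, b*j0) ∈ Amalg f J
  have haux : ∀ b : B, ((0 : A), b * j0) ∈ Amalg f J := fun b =>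
    ⟨0, b * j0, J.mul_mem_left b hj0J, by simp⟩
  haveI : IsLocalization Q.primeCompl (Localization.AtPrime q) := by
    constructor
    constructor
    · rintro ⟨x, hx⟩
      rw [(hmem x)] at hx
      exact IsLocalization.map_units (M := q.primeCompl) (Localization.AtPrime q)
        ⟨(x : A × B).2, hx⟩
    · intro z
      obtain ⟨⟨b, t⟩, h⟩ := IsLocalization.surj q.primeCompl z
      refine ⟨⟨⟨(0, b * j0), haux b⟩, ⟨⟨(0, (t : B) * j0), haux t⟩, ?_⟩⟩, ?_⟩
      · rw [hmem]
        exact fun hc => (hq.mem_or_mem hc).elim t.2 hj0q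
      · simp only [halg, map_mul]
        calc z * (algebraMap B (Localization.AtPrime q) (t : B)
              * algebraMap B (Localization.AtPrime q) j0)
            = (z * algebraMap B (Localization.AtPrime q) (t : B))
              * algebraMap B (Localization.AtPrime q) j0 := by ring
          _ = _ := by rw [h]
    · intro x y hxy
      rw [halg, halg] at hxy
      obtain ⟨c, hc⟩ := (IsLocalization.eq_iff_exists q.primeCompl _).mp hxy
      refine ⟨⟨⟨(0, (c : B) * j0), haux c⟩, ?_⟩, ?_⟩
      · rw [hmem]
        exact fun hcc => (hq.mem_or_mem hcc).elim c.2 hj0q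
      · ext
        · show (0 : A) * (x : A × B).1 = 0 * (y : A × B).1
          simp
        · show (c : B) * j0 * (x : A × B).2 = (c : B) * j0 * (y : A × B).2
          calc (c : B) * j0 * (x : A × B).2 = ((c : B) * (x : A × B).2) * j0 := by ring
            _ = ((c : B) * (y : A × B).2) * j0 := by rw [hc]
            _ = (c : B) * j0 * (y : A × B).2 := by ring
  exact ⟨(IsLocalization.algEquiv Q.primeCompl (Localization.AtPrime Q)
    (Localization.AtPrime q)).toRingEquiv⟩
end

section
/- If J is finitely generated as an A-module (via f), then A ⋈^f J is Noetherian if and only if A is Noetherian. -/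
set_option synthInstance.maxHeartbeats 1000000
set_option maxHeartbeats 1000000
/-- The amalgamation as a subalgebra of `A × B`, when `B` is an `A`-algebra. -/
def AmalgA (A : Type*) {B : Type*} [CommRing A] [CommRing B] [Algebra A B] (J : Ideal B) :
    Subalgebra A (A × B) :=
  { Amalg (algebraMap A B) J with
    algebraMap_mem' := fun a => ⟨a, 0, J.zero_mem, by simp⟩ }


/-- If `J` is finitely generated as an `A`-module, then `A ⋈^f J` is Noetherian
iff `A` is Noetherian. -/
theorem amalgamation_isNoetherianRing_iff {A B : Type*} [CommRing A] [CommRing B]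
    [Algebra A B] (J : Ideal B) (hfg : (Submodule.restrictScalars A J).FG) :
    IsNoetherianRing (AmalgA A J) ↔ IsNoetherianRing A := by
  constructor
  · intro h
    refine isNoetherianRing_of_surjective (AmalgA A J) A
      ((RingHom.fst A B).comp (AmalgA A J).toSubring.subtype) (fun a => ?_)
    exact ⟨⟨(a, algebraMap A B a), a, 0, J.zero_mem, by simp⟩, rfl⟩
  · intro h
    obtain ⟨s, hs⟩ := hfg
    classical
    have hfg2 : (Subalgebra.toSubmodule (AmalgA A J)).FG := by
      refine ⟨insert ((1:A),(1:B)) (s.image (fun b => ((0:A), b))), le_antisymm ?_ ?_⟩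
      · rw [Submodule.span_le]
        rintro x hx
        simp only [Finset.coe_insert, Set.mem_insert_iff, Finset.coe_image,
          Set.mem_image] at hx
        rcases hx with rfl | ⟨b, hb, rfl⟩
        · exact ⟨1, 0, J.zero_mem, by simp⟩
        · have hbJ : b ∈ J := by
            have : b ∈ Submodule.span A (s : Set B) := Submodule.subset_span hb
            rw [hs] at this; exact this
          exact ⟨0, b, hbJ, by simp⟩
      · intro x hx
        obtain ⟨a, j, hj, hx'⟩ := hx
        have h1 : a • (((1:A),(1:B)) : A × B) = (a, algebraMap A B a) := by
          simp [Prod.smul_def, Algebra.smul_def]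
        have hj' : j ∈ Submodule.span A (s : Set B) := hs ▸ hj
        have h2 := Submodule.mem_map_of_mem (f := LinearMap.inr A A B) hj'
        rw [Submodule.map_span] at h2
        have : x = a • (((1:A),(1:B)) : A × B) + ((0:A), j) := by
          rw [h1, hx']; ext <;> simp
        rw [this]
        refine Submodule.add_mem _
          (Submodule.smul_mem _ _ (Submodule.subset_span (by simp))) ?_
        refine Submodule.span_mono ?_ h2
        rintro _ ⟨b, hb, rfl⟩
        simp only [LinearMap.inr_apply, Finset.coe_insert, Set.mem_insert_iff,
          Finset.coe_image, Set.mem_image]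
        exact Or.inr ⟨b, hb, rfl⟩
    have hfin : Module.Finite A (AmalgA A J) := Module.Finite.iff_fg.mpr hfg2
    exact isNoetherian_of_tower A inferInstance
end

section
/- If Ann_{f(A)+J}(J) = 0 (i.e., no nonzero element of the subring f(A)+J of B annihilates J), then Hom_{A ⋈^f J}(A, A ⋈^f J) is isomorphic as an (A ⋈^f J)-module to the ideal f⁻¹(J) × 0 := {(a, 0) | a ∈ f⁻¹(J)} of A ⋈^f J, where A is viewed as an (A ⋈^f J)-module via the projection onto the first coordinate. -/
set_option synthInstance.maxHeartbeats 1000000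
set_option maxHeartbeats 1000000
/-- If no nonzero element of `f(A) + J` annihilates `J`, then
`Hom_{A ⋈^f J}(A, A ⋈^f J) ≅ f⁻¹(J) × 0` as `A ⋈^f J`-modules, where `A` is an
`A ⋈^f J`-module via the first projection. -/
theorem amalgamation_hom_iso_comap_times_zero {A B : Type*} [CommRing A] [CommRing B]
    (f : A →+* B) (J : Ideal B)
    (hann : ∀ b : B, (∃ a : A, ∃ j ∈ J, b = f a + j) → (∀ x ∈ J, b * x = 0) → b = 0) :
    letI : Module (Amalg f J) A :=
      Module.compHom A ((RingHom.fst A B).comp (Amalg f J).subtype)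
    ∃ I : Ideal (Amalg f J),
      (I : Set (Amalg f J)) =
        {x : Amalg f J | (x : A × B).1 ∈ J.comap f ∧ (x : A × B).2 = 0} ∧
      Nonempty ((A →ₗ[Amalg f J] Amalg f J) ≃ₗ[Amalg f J] I) := by
  letI : Module (Amalg f J) A :=
    Module.compHom A ((RingHom.fst A B).comp (Amalg f J).subtype)
  have smul_def : ∀ (r : Amalg f J) (a : A), r • a = (r : A × B).1 * a := fun r a => by
    show ((RingHom.fst A B).comp (Amalg f J).subtype) r • a = _
    rfl
  refine ⟨{ carrier := {x : Amalg f J | (x : A × B).1 ∈ J.comap f ∧ (x : A × B).2 = 0}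
            add_mem' := ?_
            zero_mem' := ?_
            smul_mem' := ?_ }, rfl, ?_⟩
  · rintro x y ⟨hx1, hx2⟩ ⟨hy1, hy2⟩
    exact ⟨Ideal.add_mem _ hx1 hy1, by simp [hx2, hy2]⟩
  · exact ⟨by simp, rfl⟩
  · rintro r x ⟨hx1, hx2⟩
    refine ⟨?_, ?_⟩
    · simpa using Ideal.mul_mem_left _ (f (r : A × B).1) hx1
    · show ((r : A × B) * (x : A × B)).2 = 0
      simp [hx2]
  -- key: φ 1 lies in the ideal
  have key : ∀ φ : A →ₗ[Amalg f J] Amalg f J,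
      ((φ 1 : Amalg f J) : A × B).1 ∈ J.comap f ∧ ((φ 1 : Amalg f J) : A × B).2 = 0 := by
    intro φ
    have h2 : ((φ 1 : Amalg f J) : A × B).2 = 0 := by
      obtain ⟨a, j, hj, hy⟩ := (φ 1).2
      apply hann _ ⟨a, j, hj, by rw [hy]⟩
      intro x hx
      have hmem : ((0 : A), x) ∈ Amalg f J := ⟨0, x, hx, by simp⟩
      have hms := φ.map_smul ⟨(0, x), hmem⟩ 1
      rw [smul_def] at hms
      have h0 : (⟨(0, x), hmem⟩ : Amalg f J) • φ 1 = 0 := by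
        rw [← hms]; simp
      have := congrArg (fun z : Amalg f J => ((z : A × B)).2) h0
      simpa [mul_comm] using this
    refine ⟨?_, h2⟩
    obtain ⟨a, j, hj, hy⟩ := (φ 1).2
    have ha : ((φ 1 : Amalg f J) : A × B).1 = a := by rw [hy]
    have hb : f a + j = 0 := by rw [hy] at h2; exact h2
    simp only [Ideal.mem_comap, ha]
    rw [eq_neg_of_add_eq_zero_left hb]; exact J.neg_mem hj
  have memR : ∀ (x : Amalg f J) (a : A),
      ((x : A × B).1 ∈ J.comap f ∧ (x : A × B).2 = 0) →
      ((a * (x : A × B).1, (0 : B)) ∈ Amalg f J) := by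
    rintro x a ⟨hx1, _⟩
    exact ⟨a * (x : A × B).1, -(f a * f (x : A × B).1),
      J.neg_mem (J.mul_mem_left _ hx1), by simp [Prod.ext_iff]⟩
  refine ⟨⟨⟨⟨fun φ => ⟨φ 1, key φ⟩, ?_⟩, ?_⟩,
    fun x => { toFun := fun a => ⟨(a * ((x : Amalg f J) : A × B).1, 0), memR x a x.2⟩
               map_add' := ?_
               map_smul' := ?_ }, ?_, ?_⟩⟩
  · intro φ ψ; rfl
  · intro r φ; rfl
  · intro a b
    apply Subtype.ext
    simp [Prod.ext_iff, add_mul]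
  · intro r a
    apply Subtype.ext
    show ((r • a) * _, (0:B)) = ((r : A × B) * _ : A × B)
    rw [smul_def]
    simp [Prod.ext_iff, mul_assoc]
  · -- left inverse
    intro φ
    apply LinearMap.ext
    intro a
    apply Subtype.ext
    have hmem : ((a : A), f a) ∈ Amalg f J := ⟨a, 0, J.zero_mem, by simp⟩
    have h1 : φ a = (⟨(a, f a), hmem⟩ : Amalg f J) • φ 1 := by
      rw [← φ.map_smul, smul_def]; simp
    have h2 := (key φ).2
    rw [h1]
    show ((a * _ : A), (0:B)) = ((a, f a) * ((φ 1 : Amalg f J) : A × B) : A × B)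
    simp [Prod.ext_iff, h2]
  · -- right inverse
    intro x
    apply Subtype.ext
    apply Subtype.ext
    have h2 := x.2.2
    show ((1 * _ : A), (0:B)) = ((x : Amalg f J) : A × B)
    simp [Prod.ext_iff, h2.symm]
end
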